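/- Suppose ‖T(t,s)‖ ≤ Me^{λ̄|t−s|+ε|s|} for all t,s, and f satisfies (F3) (with η ≤ 1) and (F4). Then there exists a constant d' > 0 such that ‖D_xφ(t,n;x) − D_xφ(t,n;y)‖ ≤ d'‖x−y‖ for every n ∈ ℤ, every t ∈ [n,n+1] and all x,y ∈ ℝ^d. -/

import Mathlib

/- STATEMENT 14: A Lipschitz bound for the derivative of the solution with respect
to the initial condition: there is d' > 0 with
‖D_xφ(t,n;x) − D_xφ(t,n;y)‖ ≤ d' ‖x−y‖ for t ∈ [n, n+1]. -/

noncomputable section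

/-- `ℝ^d` -/
abbrev Ed (d : ℕ) := Fin d → ℝ

namespace Aux14

open ContinuousLinearMap

variable {d : ℕ}

/-- Reconstruct an endomorphism of `Ed d` from its columns, as a continuous linear map. -/
def colMap (d : ℕ) : (Fin d → Ed d) →L[ℝ] (Ed d →L[ℝ] Ed d) :=
  ∑ j : Fin d, (smulRightL ℝ (Ed d) (Ed d) (ContinuousLinearMap.proj j)).comp
    (ContinuousLinearMap.proj j)

theorem colMap_apply (v : Fin d → Ed d) :
    colMap d v = ∑ j : Fin d, (ContinuousLinearMap.proj (R := ℝ)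
      (φ := fun _ : Fin d => ℝ) j).smulRight (v j) := by
  simp only [colMap, ContinuousLinearMap.sum_apply, ContinuousLinearMap.comp_apply, proj_apply]
  rfl

theorem colMap_cols (L : Ed d →L[ℝ] Ed d) :
    colMap d (fun j => L (Pi.single j 1)) = L := by
  ext x
  rw [colMap_apply]
  simp only [ContinuousLinearMap.sum_apply, smulRight_apply, proj_apply]
  have : ∀ j : Fin d, x j • L (Pi.single j 1) = L (Pi.single j (x j)) := by
    intro j
    rw [← map_smul]
    congr 1
    rw [← Pi.single_smul, smul_eq_mul, mul_one]
  simp_rw [this, ← map_sum, Finset.univ_sum_single]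

theorem opHasDerivAt {u : ℝ → Ed d →L[ℝ] Ed d} {U' : Ed d →L[ℝ] Ed d} {t : ℝ}
    (h : ∀ x, HasDerivAt (fun τ => u τ x) (U' x) t) : HasDerivAt u U' t := by
  have h1 : HasDerivAt (fun τ => (fun j => u τ (Pi.single j 1)))
      (fun j => U' (Pi.single j 1)) t := hasDerivAt_pi.mpr fun j => h _
  have h2 := (colMap d).hasFDerivAt.comp_hasDerivAt t h1
  have e : (⇑(colMap d) ∘ fun τ j => u τ (Pi.single j 1)) = u :=
    funext fun τ => colMap_cols (u τ)
  rw [e, colMap_cols] at h2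
  exact h2

end Aux14

set_option maxHeartbeats 2000000 in
theorem derivative_of_solution_lipschitz_in_initial_condition (d : ℕ)
    -- the linear equation x' = A(t)x and its evolution family T(t,s)
    (A : ℝ → Ed d →L[ℝ] Ed d) (T : ℝ → ℝ → Ed d →L[ℝ] Ed d)
    (hT_id : ∀ t, T t t = ContinuousLinearMap.id ℝ (Ed d))
    (hT_comp : ∀ t s r, (T t s).comp (T s r) = T t r)
    (hT_deriv : ∀ s x t, HasDerivAt (fun τ => T τ s x) (A t (T t s x)) t)
    (M lamBar eps η : ℝ) (hM : 0 < M) (hlamBar : 0 < lamBar) (heps : 0 ≤ eps)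
    (hη : 0 < η) (hη1 : η ≤ 1)
    (hgrowth : ∀ t s, ‖T t s‖ ≤ M * Real.exp (lamBar * |t - s| + eps * |s|))
    -- the perturbation f, continuous, C¹ in x with jointly continuous derivative
    (f : ℝ → Ed d → Ed d) (Df : ℝ → Ed d → (Ed d →L[ℝ] Ed d))
    (hf_cont : Continuous (fun p : ℝ × Ed d => f p.1 p.2))
    (hf_diff : ∀ t x, HasFDerivAt (f t) (Df t x) x)
    (hDf_cont : Continuous (fun p : ℝ × Ed d => Df p.1 p.2))
    -- (F3) and (F4)
    (B : ℝ) (hB : 0 < B)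
    (hF3 : ∀ t x, ‖Df t x‖ ≤ η * Real.exp (-3 * eps * |t|))
    (hF4 : ∀ t x y, ‖Df t x - Df t y‖ ≤ B * Real.exp (-4 * eps * |t|) * ‖x - y‖)
    -- φ(t,t₀;x): the globally defined solution of x' = A(t)x + f(t,x), C¹ in x,
    -- satisfying the variation-of-parameters formula
    (φ : ℝ → ℝ → Ed d → Ed d) (Dφ : ℝ → ℝ → Ed d → (Ed d →L[ℝ] Ed d))
    (hφ_init : ∀ t₀ x, φ t₀ t₀ x = x)
    (hφ_sol : ∀ t₀ x t, HasDerivAt (fun τ => φ τ t₀ x) (A t (φ t t₀ x) + f t (φ t t₀ x)) t)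
    (hφ_diff : ∀ t t₀ x, HasFDerivAt (φ t t₀) (Dφ t t₀ x) x)
    (hDvop : ∀ t t₀ x, Dφ t t₀ x =
      T t t₀ + ∫ s in t₀..t, (T t s).comp ((Df s (φ s t₀ x)).comp (Dφ s t₀ x))) :
    -- then there is d' > 0 with ‖D_xφ(t,n;x) − D_xφ(t,n;y)‖ ≤ d' ‖x−y‖
    -- for all n ∈ ℤ, t ∈ [n, n+1] and x, y ∈ ℝ^d
    ∃ d' : ℝ, 0 < d' ∧
      ∀ (n : ℤ) (t : ℝ) (x y : Ed d), t ∈ Set.Icc (n : ℝ) ((n : ℝ) + 1) →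
        ‖Dφ t (n : ℝ) x - Dφ t (n : ℝ) y‖ ≤ d' * ‖x - y‖ := by
  classical
  set K := M ^ 2 * Real.exp (2 * lamBar + 2 * eps) with hKdef
  have hK0 : 0 < K := by positivity
  set C2 := M * Real.exp lamBar * Real.exp K with hC2def
  have hC20 : 0 < C2 := by positivity
  set L := M * Real.exp lamBar with hLdef
  have hL0 : 0 < L := by positivity
  set c0 := L * B * C2 ^ 2 * Real.exp (3 * eps) with hc0def
  have hc00 : 0 < c0 := by positivity
  refine ⟨c0 * Real.exp L, by positivity, ?_⟩
  intro n t x y ht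
  set a : ℝ := (n : ℝ) with ha
  obtain ⟨hta, htb⟩ := ht
  -- identities for the evolution family
  have idTa : ∀ s : ℝ, (T s a).comp (T a s) = ContinuousLinearMap.id ℝ (Ed d) := fun s => by
    rw [hT_comp]; exact hT_id s
  have idaT : ∀ s : ℝ, (T a s).comp (T s a) = ContinuousLinearMap.id ℝ (Ed d) := fun s => by
    rw [hT_comp]; exact hT_id a
  have mulTa : ∀ s : ℝ, T s a * T a s = 1 := fun s => by
    rw [ContinuousLinearMap.mul_def, idTa s, ContinuousLinearMap.one_def]
  have mulaT : ∀ s : ℝ, T a s * T s a = 1 := fun s => by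
    rw [ContinuousLinearMap.mul_def, idaT s, ContinuousLinearMap.one_def]
  set Tu : ℝ → (Ed d →L[ℝ] Ed d)ˣ := fun s => ⟨T s a, T a s, mulTa s, mulaT s⟩ with hTu
  -- operator-valued derivatives
  have hTop : ∀ t' : ℝ, HasDerivAt (fun τ => T τ a) ((A t').comp (T t' a)) t' := fun t' =>
    Aux14.opHasDerivAt (fun x => hT_deriv a x t')
  have hTat : ∀ t' : ℝ, HasDerivAt (fun τ => T a τ) (-(T a t' * A t')) t' := by
    intro t'
    have h2 : HasDerivAt (fun τ => Ring.inverse (T τ a))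
        ((-ContinuousLinearMap.mulLeftRight ℝ _ (T a t') (T a t')) ((A t').comp (T t' a))) t' :=
      by have := (hasFDerivAt_ringInverse (𝕜 := ℝ) (Tu t')).comp_hasDerivAt t' (hTop t'); exact this
    have e1 : (fun τ : ℝ => Ring.inverse (T τ a)) = fun τ => T a τ :=
      funext fun τ => Ring.inverse_unit (Tu τ)
    have e2 : ((-ContinuousLinearMap.mulLeftRight ℝ _ (T a t') (T a t')) ((A t').comp (T t' a)))
        = -(T a t' * A t') := by
      simp only [ContinuousLinearMap.neg_apply, ContinuousLinearMap.mulLeftRight_apply]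
      rw [← ContinuousLinearMap.mul_def (A t') (T t' a)]
      rw [show T a t' * (A t' * T t' a) * T a t' = T a t' * A t' * (T t' a * T a t') by
        noncomm_ring]
      rw [mulTa t', mul_one]
    rw [e1, e2] at h2
    exact h2
  have hψ : ∀ (z : Ed d) (t' : ℝ),
      HasDerivAt (fun τ => T a τ (φ τ a z)) (T a t' (f t' (φ t' a z))) t' := by
    intro z t'
    have h := (hTat t').clm_apply (hφ_sol a z t')
    refine h.congr_deriv ?_
    simp only [ContinuousLinearMap.neg_apply, ContinuousLinearMap.mul_apply, map_add]
    abel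
  have hφinv : ∀ (s : ℝ) (z : Ed d), φ s a z = T s a (T a s (φ s a z)) := by
    intro s z
    have := congrArg (fun (Q : Ed d →L[ℝ] Ed d) => Q (φ s a z)) (idTa s)
    simpa using this.symm
  -- norm bounds for T on the interval J = [a, a+1]
  have hJ1 : ∀ s ∈ Set.Icc a (a + 1), |s - a| ≤ 1 := by
    intro s hs
    rw [abs_le]
    exact ⟨by linarith [hs.1], by linarith [hs.2]⟩
  have hJ2 : ∀ s ∈ Set.Icc a (a + 1), |a| ≤ |s| + 1 := by
    intro s hs
    have h1 : |a| - |s| ≤ |s - a| := by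
      rw [abs_sub_comm s a]
      exact abs_sub_abs_le_abs_sub a s
    linarith [hJ1 s hs]
  have hTsa : ∀ s ∈ Set.Icc a (a + 1), ‖T s a‖ ≤ M * Real.exp (lamBar + eps * |a|) := by
    intro s hs
    refine (hgrowth s a).trans ?_
    have h1 : lamBar * |s - a| + eps * |a| ≤ lamBar + eps * |a| := by
      nlinarith [hJ1 s hs, abs_nonneg (s - a)]
    exact mul_le_mul_of_nonneg_left (Real.exp_le_exp.2 h1) hM.le
  have hTgen : ∀ r ∈ Set.Icc a (a + 1), ∀ s ∈ Set.Icc a (a + 1),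
      ‖T r s‖ ≤ M * Real.exp (lamBar + eps * |s|) := by
    intro r hr s hs
    refine (hgrowth r s).trans ?_
    have h1 : |r - s| ≤ 1 := by
      rw [abs_le]
      exact ⟨by linarith [hr.1, hs.2], by linarith [hr.2, hs.1]⟩
    have h2 : lamBar * |r - s| + eps * |s| ≤ lamBar + eps * |s| := by
      nlinarith [abs_nonneg (r - s)]
    exact mul_le_mul_of_nonneg_left (Real.exp_le_exp.2 h2) hM.le
  have haJ : a ∈ Set.Icc a (a + 1) := ⟨le_rfl, by linarith⟩
  -- Lipschitz property of f
  have hfLip : ∀ (s : ℝ) (p q : Ed d),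
      ‖f s p - f s q‖ ≤ η * Real.exp (-3 * eps * |s|) * ‖p - q‖ := by
    intro s p q
    exact Convex.norm_image_sub_le_of_norm_hasFDerivWithin_le
      (fun z _ => (hf_diff s z).hasFDerivWithinAt) (fun z _ => hF3 s z) convex_univ trivial trivial
  -- the key uniform constant bound
  have hKey : ∀ s ∈ Set.Icc a (a + 1),
      ‖T a s‖ * (η * Real.exp (-3 * eps * |s|)) * ‖T s a‖ ≤ K := by
    intro s hs
    have h1 := hTgen a haJ s hs
    have h2 := hTsa s hs
    have h3 : η * Real.exp (-3 * eps * |s|) ≤ Real.exp (-3 * eps * |s|) := by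
      nlinarith [Real.exp_pos (-3 * eps * |s|)]
    calc ‖T a s‖ * (η * Real.exp (-3 * eps * |s|)) * ‖T s a‖
        ≤ (M * Real.exp (lamBar + eps * |s|)) * Real.exp (-3 * eps * |s|) *
            (M * Real.exp (lamBar + eps * |a|)) := by
          gcongr <;> positivity
      _ = M ^ 2 * Real.exp ((lamBar + eps * |s|) + (-3 * eps * |s|) + (lamBar + eps * |a|)) := by
          rw [show M * Real.exp (lamBar + eps * |s|) * Real.exp (-3 * eps * |s|) *
              (M * Real.exp (lamBar + eps * |a|)) = M ^ 2 * (Real.exp (lamBar + eps * |s|) *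
              Real.exp (-3 * eps * |s|) * Real.exp (lamBar + eps * |a|)) from by ring]
          rw [← Real.exp_add, ← Real.exp_add]
      _ ≤ K := by
          rw [hKdef]
          have h4 : eps * |a| ≤ eps * (|s| + 1) := mul_le_mul_of_nonneg_left (hJ2 s hs) heps
          have h5 : (lamBar + eps * |s|) + (-3 * eps * |s|) + (lamBar + eps * |a|)
              ≤ 2 * lamBar + 2 * eps := by
            nlinarith [mul_nonneg heps (abs_nonneg s)]
          exact mul_le_mul_of_nonneg_left (Real.exp_le_exp.2 h5) (by positivity)
  -- difference quotients of the conjugated flow: uniform bound and Lipschitz estimate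
  have main_uh : ∀ (z v : Ed d), ∀ h : ℝ, h ≠ 0 →
      (∀ t' ∈ Set.Icc a (a + 1),
        ‖h⁻¹ • (T a t' (φ t' a (z + h • v)) - T a t' (φ t' a z))‖ ≤ ‖v‖ * Real.exp K) ∧
      (∀ t' ∈ Set.Icc a (a + 1), ∀ t'' ∈ Set.Icc a (a + 1),
        ‖h⁻¹ • (T a t' (φ t' a (z + h • v)) - T a t' (φ t' a z)) -
         h⁻¹ • (T a t'' (φ t'' a (z + h • v)) - T a t'' (φ t'' a z))‖
          ≤ (K * (‖v‖ * Real.exp K)) * |t' - t''|) := by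
    intro z v h hh
    set u : ℝ → Ed d := fun τ => h⁻¹ • (T a τ (φ τ a (z + h • v)) - T a τ (φ τ a z)) with hudef
    set u' : ℝ → Ed d :=
      fun τ => h⁻¹ • (T a τ (f τ (φ τ a (z + h • v))) - T a τ (f τ (φ τ a z))) with hu'def
    have hud : ∀ τ, HasDerivAt u (u' τ) τ := fun τ => ((hψ (z + h • v) τ).sub (hψ z τ)).const_smul h⁻¹
    have hucont : Continuous u := continuous_iff_continuousAt.2 fun τ => (hud τ).continuousAt
    have hua : u a = v := by
      rw [hudef]
      simp only [hT_id, hφ_init, ContinuousLinearMap.id_apply, ContinuousLinearMap.coe_id', id_eq]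
      rw [add_sub_cancel_left, smul_smul, inv_mul_cancel₀ hh, one_smul]
    have hub : ∀ τ ∈ Set.Icc a (a + 1), ‖u' τ‖ ≤ K * ‖u τ‖ := by
      intro τ hτ
      have e4 : φ τ a (z + h • v) - φ τ a z
          = T τ a (T a τ (φ τ a (z + h • v)) - T a τ (φ τ a z)) := by
        rw [map_sub, ← hφinv, ← hφinv]
      have e5 : ‖φ τ a (z + h • v) - φ τ a z‖ ≤ ‖T τ a‖ * (|h| * ‖u τ‖) := by
        rw [e4]
        refine (ContinuousLinearMap.le_opNorm _ _).trans ?_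
        have e5a : T a τ (φ τ a (z + h • v)) - T a τ (φ τ a z) = h • u τ := by
          rw [hudef]
          simp only [smul_smul, mul_inv_cancel₀ hh, one_smul]
        rw [e5a, norm_smul, Real.norm_eq_abs]
      have e6 : ‖u' τ‖ ≤ |h|⁻¹ *
          (‖T a τ‖ * (η * Real.exp (-3 * eps * |τ|) * ‖φ τ a (z + h • v) - φ τ a z‖)) := by
        rw [hu'def]
        simp only [norm_smul, norm_inv, Real.norm_eq_abs]
        refine mul_le_mul_of_nonneg_left ?_ (by positivity)
        rw [← map_sub]
        refine (ContinuousLinearMap.le_opNorm _ _).trans ?_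
        exact mul_le_mul_of_nonneg_left (hfLip τ _ _) (norm_nonneg _)
      have e7 : ‖u' τ‖ ≤ (‖T a τ‖ * (η * Real.exp (-3 * eps * |τ|)) * ‖T τ a‖) * ‖u τ‖ *
          (|h|⁻¹ * |h|) := by
        refine e6.trans ?_
        have := mul_le_mul_of_nonneg_left e5 (mul_nonneg (norm_nonneg (T a τ))
          (by positivity : (0:ℝ) ≤ η * Real.exp (-3 * eps * |τ|)))
        calc |h|⁻¹ * (‖T a τ‖ * (η * Real.exp (-3 * eps * |τ|) *
              ‖φ τ a (z + h • v) - φ τ a z‖))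
            = (‖T a τ‖ * (η * Real.exp (-3 * eps * |τ|)) *
              ‖φ τ a (z + h • v) - φ τ a z‖) * |h|⁻¹ := by ring
          _ ≤ (‖T a τ‖ * (η * Real.exp (-3 * eps * |τ|)) * (‖T τ a‖ * (|h| * ‖u τ‖))) * |h|⁻¹ := by
              refine mul_le_mul_of_nonneg_right ?_ (by positivity)
              refine mul_le_mul_of_nonneg_left e5 (by positivity)
          _ = (‖T a τ‖ * (η * Real.exp (-3 * eps * |τ|)) * ‖T τ a‖) * ‖u τ‖ * (|h|⁻¹ * |h|) := by
              ring
      rw [inv_mul_cancel₀ (abs_ne_zero.2 hh), mul_one] at e7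
      exact e7.trans (mul_le_mul_of_nonneg_right (hKey τ hτ) (norm_nonneg _))
    have hgron : ∀ τ ∈ Set.Icc a (a + 1), ‖u τ‖ ≤ ‖v‖ * Real.exp K := by
      have hg := norm_le_gronwallBound_of_norm_deriv_right_le (f := u) (f' := u')
        (δ := ‖v‖) (K := K) (ε := 0) (a := a) (b := a + 1)
        hucont.continuousOn
        (fun τ _ => (hud τ).hasDerivWithinAt)
        (by rw [hua])
        (fun τ hτ => by
          rw [add_zero]
          exact hub τ (Set.Ico_subset_Icc_self hτ))
      intro τ hτ
      refine (hg τ hτ).trans ?_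
      rw [gronwallBound_ε0]
      refine mul_le_mul_of_nonneg_left (Real.exp_le_exp.2 ?_) (norm_nonneg v)
      nlinarith [hτ.1, hτ.2]
    refine ⟨hgron, ?_⟩
    intro t' ht' t'' ht''
    have hub2 : ∀ τ ∈ Set.Icc a (a + 1), ‖u' τ‖ ≤ K * (‖v‖ * Real.exp K) :=
      fun τ hτ => (hub τ hτ).trans (mul_le_mul_of_nonneg_left (hgron τ hτ) hK0.le)
    have := (convex_Icc a (a + 1)).norm_image_sub_le_of_norm_hasDerivWithin_le
      (f := u) (f' := u') (fun τ _ => (hud τ).hasDerivWithinAt) hub2 ht'' ht'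
    simpa [Real.norm_eq_abs] using this
  -- passing to the limit h → 0
  have hlim : ∀ (z v : Ed d) (t' : ℝ),
      Filter.Tendsto (fun h : ℝ => h⁻¹ • (T a t' (φ t' a (z + h • v)) - T a t' (φ t' a z)))
        (nhdsWithin (0 : ℝ) {(0 : ℝ)}ᶜ) (nhds (T a t' (Dφ t' a z v))) := by
    intro z v t'
    have hline : HasDerivAt (fun h : ℝ => z + h • v) v 0 := by
      have h1 : HasDerivAt (fun h : ℝ => h • v) ((1 : ℝ) • v) 0 :=
        (hasDerivAt_id (0 : ℝ)).smul_const v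
      simpa using h1.const_add z
    have hcomp : HasDerivAt (fun h : ℝ => φ t' a (z + h • v)) (Dφ t' a z v) 0 := by
      have hg : HasFDerivAt (φ t' a) (Dφ t' a z) ((fun h : ℝ => z + h • v) 0) := by
        simpa using hφ_diff t' a z
      have := hg.comp_hasDerivAt 0 hline
      exact this
    have hslope := hasDerivAt_iff_tendsto_slope.1 hcomp
    have hT := ((T a t').continuous.tendsto (Dφ t' a z v)).comp hslope
    refine hT.congr ?_
    intro h
    simp only [Function.comp_apply, slope_def_module, sub_zero, map_smul, map_sub, zero_smul,
      add_zero]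
  -- pointwise bounds for Dφ
  have hDφvec : ∀ (z v : Ed d), ∀ t' ∈ Set.Icc a (a + 1),
      ‖T a t' (Dφ t' a z v)‖ ≤ ‖v‖ * Real.exp K := by
    intro z v t' ht'
    refine le_of_tendsto (hlim z v t').norm ?_
    filter_upwards [self_mem_nhdsWithin] with h hh
    exact (main_uh z v h (by simpa using hh)).1 t' ht'
  have hDφop : ∀ (z : Ed d), ∀ t' ∈ Set.Icc a (a + 1),
      ‖Dφ t' a z‖ ≤ C2 * Real.exp (eps * |a|) := by
    intro z t' ht'
    refine ContinuousLinearMap.opNorm_le_bound _ (by positivity) (fun v => ?_)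
    have e1 : Dφ t' a z v = T t' a (T a t' (Dφ t' a z v)) := by
      have := congrArg (fun (Q : Ed d →L[ℝ] Ed d) => Q (Dφ t' a z v)) (idTa t')
      simpa using this.symm
    rw [e1]
    calc ‖T t' a (T a t' (Dφ t' a z v))‖
        ≤ ‖T t' a‖ * ‖T a t' (Dφ t' a z v)‖ := ContinuousLinearMap.le_opNorm _ _
      _ ≤ (M * Real.exp (lamBar + eps * |a|)) * (‖v‖ * Real.exp K) := by
          refine mul_le_mul (hTsa t' ht') (hDφvec z v t' ht') (norm_nonneg _) (by positivity)
      _ = C2 * Real.exp (eps * |a|) * ‖v‖ := by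
          rw [hC2def, Real.exp_add]; ring
  -- Lipschitz bound for the flow
  have hφLip : ∀ t' ∈ Set.Icc a (a + 1), ∀ p q : Ed d,
      ‖φ t' a p - φ t' a q‖ ≤ C2 * Real.exp (eps * |a|) * ‖p - q‖ := by
    intro t' ht' p q
    exact Convex.norm_image_sub_le_of_norm_hasFDerivWithin_le
      (fun z _ => (hφ_diff t' a z).hasFDerivWithinAt)
      (fun z _ => hDφop z t' ht') convex_univ trivial trivial
  -- continuity in time
  have hφcont : ∀ z : Ed d, Continuous (fun s => φ s a z) := fun z =>
    continuous_iff_continuousAt.2 fun s => (hφ_sol a z s).continuousAt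
  have hTacont : Continuous (fun s : ℝ => T a s) :=
    continuous_iff_continuousAt.2 fun s => (hTat s).continuousAt
  have hTacont' : Continuous (fun s : ℝ => T s a) :=
    continuous_iff_continuousAt.2 fun s => (hTop s).continuousAt
  have hDφtime : ∀ z : Ed d, ContinuousOn (fun s => Dφ s a z) (Set.Icc a (a + 1)) := by
    intro z
    have hcols : ∀ j : Fin d, ContinuousOn
        (fun s => T a s (Dφ s a z (Pi.single j 1))) (Set.Icc a (a + 1)) := by
      intro j
      set CL := K * (‖(Pi.single j 1 : Ed d)‖ * Real.exp K) with hCL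
      have hCL0 : 0 ≤ CL := by positivity
      have hlip : ∀ s ∈ Set.Icc a (a + 1), ∀ s' ∈ Set.Icc a (a + 1),
          ‖T a s (Dφ s a z (Pi.single j 1)) - T a s' (Dφ s' a z (Pi.single j 1))‖
            ≤ CL * |s - s'| := by
        intro s hs s' hs'
        refine le_of_tendsto ((hlim z (Pi.single j 1) s).sub (hlim z (Pi.single j 1) s')).norm ?_
        filter_upwards [self_mem_nhdsWithin] with h hh
        exact (main_uh z _ h (by simpa using hh)).2 s hs s' hs'
      refine LipschitzOnWith.continuousOn (K := Real.toNNReal CL) ?_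
      refine LipschitzOnWith.of_dist_le_mul ?_
      intro s hs s' hs'
      rw [dist_eq_norm, dist_eq_norm, Real.coe_toNNReal CL hCL0]
      exact (hlip s hs s' hs').trans_eq (by rw [Real.norm_eq_abs])
    have hassemble : ContinuousOn (fun s => (T a s).comp (Dφ s a z)) (Set.Icc a (a + 1)) := by
      have e : (fun s => (T a s).comp (Dφ s a z))
          = fun s => Aux14.colMap d (fun j => T a s (Dφ s a z (Pi.single j 1))) := by
        funext s
        exact (Aux14.colMap_cols ((T a s).comp (Dφ s a z))).symm
      rw [e]
      exact (Aux14.colMap d).continuous.comp_continuousOn (continuousOn_pi.2 hcols)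
    have e3 : (fun s => Dφ s a z) = fun s => (T s a).comp ((T a s).comp (Dφ s a z)) := by
      funext s
      rw [← ContinuousLinearMap.comp_assoc, idTa s, ContinuousLinearMap.id_comp]
    rw [e3]
    exact ContinuousOn.clm_comp hTacont'.continuousOn hassemble
  have hDfcont : ∀ z : Ed d, Continuous (fun s => Df s (φ s a z)) := fun z =>
    hDf_cont.comp (continuous_id.prodMk (hφcont z))
  -- integrability of the integrands
  have hInt : ∀ r ∈ Set.Icc a (a + 1), ∀ z : Ed d,
      IntervalIntegrable (fun s => (T r s).comp ((Df s (φ s a z)).comp (Dφ s a z)))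
        MeasureTheory.volume a r := by
    intro r hr z
    apply ContinuousOn.intervalIntegrable
    have hsub : Set.uIcc a r ⊆ Set.Icc a (a + 1) := by
      rw [Set.uIcc_of_le hr.1]
      exact Set.Icc_subset_Icc le_rfl hr.2
    have h1 : ContinuousOn (fun s => T r s) (Set.uIcc a r) := by
      have e : (fun s : ℝ => T r s) = fun s => (T r a).comp (T a s) := by
        funext s; rw [hT_comp]
      rw [e]
      exact (Continuous.clm_comp continuous_const hTacont).continuousOn
    exact ContinuousOn.clm_comp h1 (ContinuousOn.clm_comp ((hDfcont z).continuousOn)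
      (((hDφtime z).mono hsub)))
  set c1 := c0 * ‖x - y‖ with hc1def
  have hc10 : 0 ≤ c1 := by positivity
  have hcomp2 : ∀ (P Q R : Ed d →L[ℝ] Ed d), ‖P.comp (Q.comp R)‖ ≤ ‖P‖ * (‖Q‖ * ‖R‖) := by
    intro P Q R
    refine (ContinuousLinearMap.opNorm_comp_le _ _).trans ?_
    exact mul_le_mul_of_nonneg_left (ContinuousLinearMap.opNorm_comp_le _ _) (norm_nonneg _)
  -- pointwise bound on the difference of the integrands
  have hptwise : ∀ r ∈ Set.Icc a (a + 1), ∀ s ∈ Set.Icc a (a + 1),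
      ‖(T r s).comp ((Df s (φ s a x)).comp (Dφ s a x)) -
        (T r s).comp ((Df s (φ s a y)).comp (Dφ s a y))‖
        ≤ L * ‖Dφ s a x - Dφ s a y‖ + c1 := by
    intro r hr s hs
    have split : (T r s).comp ((Df s (φ s a x)).comp (Dφ s a x)) -
        (T r s).comp ((Df s (φ s a y)).comp (Dφ s a y))
        = (T r s).comp ((Df s (φ s a x)).comp (Dφ s a x - Dφ s a y))
          + (T r s).comp (((Df s (φ s a x)) - (Df s (φ s a y))).comp (Dφ s a y)) := by
      simp only [← ContinuousLinearMap.mul_def, mul_sub, sub_mul]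
      abel
    have t1 : ‖(T r s).comp ((Df s (φ s a x)).comp (Dφ s a x - Dφ s a y))‖
        ≤ L * ‖Dφ s a x - Dφ s a y‖ := by
      refine (hcomp2 _ _ _).trans ?_
      calc ‖T r s‖ * (‖Df s (φ s a x)‖ * ‖Dφ s a x - Dφ s a y‖)
          ≤ (M * Real.exp (lamBar + eps * |s|)) *
            ((η * Real.exp (-3 * eps * |s|)) * ‖Dφ s a x - Dφ s a y‖) := by
            refine mul_le_mul (hTgen r hr s hs)
              (mul_le_mul_of_nonneg_right (hF3 s _) (norm_nonneg _)) (by positivity) (by positivity)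
        _ ≤ L * ‖Dφ s a x - Dφ s a y‖ := by
            rw [hLdef]
            rw [show M * Real.exp (lamBar + eps * |s|) *
              ((η * Real.exp (-3 * eps * |s|)) * ‖Dφ s a x - Dφ s a y‖)
              = (M * (η * (Real.exp (lamBar + eps * |s|) * Real.exp (-3 * eps * |s|)))) *
                ‖Dφ s a x - Dφ s a y‖ from by ring]
            rw [← Real.exp_add]
            refine mul_le_mul_of_nonneg_right ?_ (norm_nonneg _)
            have h2 : Real.exp (lamBar + eps * |s| + -3 * eps * |s|) ≤ Real.exp lamBar :=
              Real.exp_le_exp.2 (by nlinarith [mul_nonneg heps (abs_nonneg s)])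
            calc M * (η * Real.exp (lamBar + eps * |s| + -3 * eps * |s|))
                ≤ M * (1 * Real.exp lamBar) := by
                  refine mul_le_mul_of_nonneg_left ?_ hM.le
                  exact mul_le_mul hη1 h2 (Real.exp_pos _).le zero_le_one
              _ = M * Real.exp lamBar := by ring
    have hφd : ‖φ s a x - φ s a y‖ ≤ C2 * Real.exp (eps * |a|) * ‖x - y‖ := hφLip s hs x y
    have t2 : ‖(T r s).comp (((Df s (φ s a x)) - (Df s (φ s a y))).comp (Dφ s a y))‖ ≤ c1 := by
      refine (hcomp2 _ _ _).trans ?_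
      have hDfd : ‖Df s (φ s a x) - Df s (φ s a y)‖
          ≤ B * Real.exp (-4 * eps * |s|) * (C2 * Real.exp (eps * |a|) * ‖x - y‖) :=
        (hF4 s _ _).trans (mul_le_mul_of_nonneg_left hφd (by positivity))
      calc ‖T r s‖ * (‖Df s (φ s a x) - Df s (φ s a y)‖ * ‖Dφ s a y‖)
          ≤ (M * Real.exp (lamBar + eps * |s|)) *
            ((B * Real.exp (-4 * eps * |s|) * (C2 * Real.exp (eps * |a|) * ‖x - y‖)) *
              (C2 * Real.exp (eps * |a|))) := by
            refine mul_le_mul (hTgen r hr s hs)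
              (mul_le_mul hDfd (hDφop y s hs) (norm_nonneg _) (by positivity))
              (by positivity) (by positivity)
        _ = (M * B * C2 ^ 2 * ‖x - y‖) *
            Real.exp ((lamBar + eps * |s|) + (-4 * eps * |s|) + (eps * |a|) + (eps * |a|)) := by
            rw [show (M * Real.exp (lamBar + eps * |s|)) *
              ((B * Real.exp (-4 * eps * |s|) * (C2 * Real.exp (eps * |a|) * ‖x - y‖)) *
                (C2 * Real.exp (eps * |a|)))
              = (M * B * C2 ^ 2 * ‖x - y‖) * (Real.exp (lamBar + eps * |s|) *
                Real.exp (-4 * eps * |s|) * Real.exp (eps * |a|) * Real.exp (eps * |a|))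
              from by ring]
            rw [← Real.exp_add, ← Real.exp_add, ← Real.exp_add]
        _ ≤ (M * B * C2 ^ 2 * ‖x - y‖) * Real.exp (lamBar + 3 * eps) := by
            refine mul_le_mul_of_nonneg_left (Real.exp_le_exp.2 ?_) (by positivity)
            nlinarith [mul_le_mul_of_nonneg_left (hJ2 s hs) heps, mul_nonneg heps (abs_nonneg s)]
        _ = c1 := by rw [hc1def, hc0def, hLdef, Real.exp_add]; ring
    calc ‖(T r s).comp ((Df s (φ s a x)).comp (Dφ s a x)) -
        (T r s).comp ((Df s (φ s a y)).comp (Dφ s a y))‖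
        = ‖(T r s).comp ((Df s (φ s a x)).comp (Dφ s a x - Dφ s a y))
          + (T r s).comp (((Df s (φ s a x)) - (Df s (φ s a y))).comp (Dφ s a y))‖ := by
          rw [split]
      _ ≤ ‖(T r s).comp ((Df s (φ s a x)).comp (Dφ s a x - Dφ s a y))‖
          + ‖(T r s).comp (((Df s (φ s a x)) - (Df s (φ s a y))).comp (Dφ s a y))‖ :=
          norm_add_le _ _
      _ ≤ L * ‖Dφ s a x - Dφ s a y‖ + c1 := add_le_add t1 t2
  -- the basic integral inequality
  have hJt : Set.Icc a t ⊆ Set.Icc a (a + 1) := Set.Icc_subset_Icc le_rfl htb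
  have hΔle : ∀ r ∈ Set.Icc a t, ‖Dφ r a x - Dφ r a y‖
      ≤ ∫ s in a..r, (L * ‖Dφ s a x - Dφ s a y‖ + c1) := by
    intro r hr
    have hrJ : r ∈ Set.Icc a (a + 1) := hJt hr
    have hra : a ≤ r := hr.1
    have hintx := hInt r hrJ x
    have hinty := hInt r hrJ y
    have hDiff : Dφ r a x - Dφ r a y = ∫ s in a..r,
        ((T r s).comp ((Df s (φ s a x)).comp (Dφ s a x)) -
          (T r s).comp ((Df s (φ s a y)).comp (Dφ s a y))) := by
      rw [intervalIntegral.integral_sub hintx hinty, hDvop r a x, hDvop r a y]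
      abel
    rw [hDiff]
    have hbint : IntervalIntegrable (fun s => L * ‖Dφ s a x - Dφ s a y‖ + c1)
        MeasureTheory.volume a r := by
      apply ContinuousOn.intervalIntegrable
      have hsub : Set.uIcc a r ⊆ Set.Icc a (a + 1) := by
        rw [Set.uIcc_of_le hra]
        exact Set.Icc_subset_Icc le_rfl hrJ.2
      exact ((continuousOn_const.mul (((hDφtime x).sub (hDφtime y)).mono hsub).norm).add
        continuousOn_const)
    refine (intervalIntegral.norm_integral_le_abs_of_norm_le ?_ hbint).trans ?_
    · refine Filter.Eventually.mono (MeasureTheory.ae_restrict_mem measurableSet_uIoc) ?_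
      intro s hsmem
      have hsJ : s ∈ Set.Icc a (a + 1) := by
        rw [Set.uIoc_of_le hra] at hsmem
        exact ⟨hsmem.1.le, hsmem.2.trans hrJ.2⟩
      exact hptwise r hrJ s hsJ
    · rw [abs_of_nonneg]
      exact intervalIntegral.integral_nonneg hra (fun s _ => by positivity)
  -- Grönwall via the primitive of the (clamped) norm
  set π : ℝ → ℝ := fun s => max a (min s (a + 1)) with hπdef
  have hπcont : Continuous π := continuous_const.max (continuous_id.min continuous_const)
  have hπmem : ∀ s, π s ∈ Set.Icc a (a + 1) :=
    fun s => ⟨le_max_left _ _, max_le (by linarith) (min_le_right _ _)⟩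
  have hπeq : ∀ s ∈ Set.Icc a (a + 1), π s = s := by
    intro s hs
    rw [hπdef]
    dsimp only
    rw [min_eq_left hs.2, max_eq_right hs.1]
  set g : ℝ → ℝ := fun s => ‖Dφ (π s) a x - Dφ (π s) a y‖ with hgdef
  have hgcont : Continuous g := by
    have := ((hDφtime x).sub (hDφtime y)).comp_continuous hπcont hπmem
    exact this.norm
  have hgnn : ∀ s, 0 ≤ g s := fun s => norm_nonneg _
  have hgeq : ∀ s ∈ Set.Icc a (a + 1), g s = ‖Dφ s a x - Dφ s a y‖ := by
    intro s hs
    rw [hgdef]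
    dsimp only
    rw [hπeq s hs]
  set Φ : ℝ → ℝ := fun r => ∫ s in a..r, g s with hΦdef
  have hΦd : ∀ r, HasDerivAt Φ (g r) r := fun r =>
    intervalIntegral.integral_hasDerivAt_right (hgcont.intervalIntegrable _ _)
      (hgcont.stronglyMeasurableAtFilter _ _) hgcont.continuousAt
  have hΦnn : ∀ r, a ≤ r → 0 ≤ Φ r := fun r hr =>
    intervalIntegral.integral_nonneg hr (fun s _ => hgnn s)
  have hbd : ∀ r ∈ Set.Icc a t, g r ≤ L * Φ r + c1 := by
    intro r hr
    have hrJ := hJt hr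
    rw [hgeq r hrJ]
    refine (hΔle r hr).trans ?_
    have e1 : (∫ s in a..r, (L * ‖Dφ s a x - Dφ s a y‖ + c1)) = ∫ s in a..r, (L * g s + c1) := by
      refine intervalIntegral.integral_congr ?_
      intro s hsmem
      have hsJ : s ∈ Set.Icc a (a + 1) := by
        rw [Set.uIcc_of_le hr.1] at hsmem
        exact ⟨hsmem.1, hsmem.2.trans hrJ.2⟩
      dsimp only
      rw [hgeq s hsJ]
    rw [e1]
    have e2 : (∫ s in a..r, (L * g s + c1)) = L * Φ r + c1 * (r - a) := by
      rw [intervalIntegral.integral_add ((hgcont.intervalIntegrable _ _).const_mul L)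
        (intervalIntegrable_const), intervalIntegral.integral_const_mul,
        intervalIntegral.integral_const, smul_eq_mul]
      rw [hΦdef]; ring
    rw [e2]
    have : c1 * (r - a) ≤ c1 * 1 := by
      refine mul_le_mul_of_nonneg_left ?_ hc10
      linarith [hrJ.2]
    linarith
  have hgw := norm_le_gronwallBound_of_norm_deriv_right_le (f := Φ) (f' := g)
    (δ := 0) (K := L) (ε := c1) (a := a) (b := t)
    (fun r _ => (hΦd r).continuousAt.continuousWithinAt)
    (fun r _ => (hΦd r).hasDerivWithinAt)
    (by rw [hΦdef]; simp)
    (fun r hr => by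
      have hr' : r ∈ Set.Icc a t := Set.Ico_subset_Icc_self hr
      have h1 := hbd r hr'
      have h2 : 0 ≤ Φ r := hΦnn r hr'.1
      rw [Real.norm_eq_abs, Real.norm_eq_abs, abs_of_nonneg (hgnn r), abs_of_nonneg h2]
      exact h1)
  have hfin := hgw t ⟨hta, le_rfl⟩
  have hΦt : Φ t ≤ gronwallBound 0 L c1 (t - a) := by
    refine (le_abs_self _).trans ?_
    rw [← Real.norm_eq_abs]
    exact hfin
  have hΔt : ‖Dφ t a x - Dφ t a y‖ ≤ L * Φ t + c1 := by
    have := hbd t ⟨hta, le_rfl⟩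
    rwa [hgeq t ⟨hta, htb⟩] at this
  have hfinal : L * Φ t + c1 ≤ c1 * Real.exp L := by
    rw [gronwallBound_of_K_ne_0 hL0.ne'] at hΦt
    have h2 : Real.exp (L * (t - a)) ≤ Real.exp L := by
      refine Real.exp_le_exp.2 ?_
      nlinarith [hL0]
    have h3 : L * (c1 / L * (Real.exp (L * (t - a)) - 1)) + c1 = c1 * Real.exp (L * (t - a)) := by
      field_simp
      ring
    nlinarith [Real.exp_pos (L * (t - a)), mul_le_mul_of_nonneg_left hΦt hL0.le]
  calc ‖Dφ t a x - Dφ t a y‖ ≤ L * Φ t + c1 := hΔt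
    _ ≤ c1 * Real.exp L := hfinal
    _ = c0 * Real.exp L * ‖x - y‖ := by rw [hc1def]; ring

end
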